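/- Let E = EuclideanSpace ℝ (Fin n), G a finite group, and ρ : G →* (E ≃ₗᵢ[ℝ] E) a group homomorphism into linear isometric equivalences. Let ν be a probability measure on E × E (modeling the joint distribution of a signal x and a noise ε) that is invariant under the diagonal action of G: for every g ∈ G, the pushforward of ν under (x, ε) ↦ (ρ g x, ρ g ε) equals ν. Let D : E → E be measurable such that (x, ε) ↦ ‖D(x + ε) − x‖ is ν-integrable. Then the group-averaged denoiser D_G(z) = (1/|G|) ∑_{g∈G} (ρ g)⁻¹ (D (ρ g z)) has expected reconstruction error no larger than that of D: ∫ ‖D_G(x + ε) − x‖ dν(x, ε) ≤ ∫ ‖D(x + ε) − x‖ dν(x, ε). -/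

import Mathlib

open MeasureTheory

/-- If the joint distribution `ν` of signal and noise is invariant under the diagonal
action of a finite group `G` acting by linear isometries, then the Reynolds-averaged
denoiser `D_G` has expected reconstruction error no larger than that of `D`. -/
theorem group_average_expected_error_le
    (n : ℕ)
    (G : Type*) [Group G] [Fintype G]
    (ρ : G →* (EuclideanSpace ℝ (Fin n) ≃ₗᵢ[ℝ] EuclideanSpace ℝ (Fin n)))
    (ν : Measure (EuclideanSpace ℝ (Fin n) × EuclideanSpace ℝ (Fin n)))
    [IsProbabilityMeasure ν]
    (hinv : ∀ g : G, ν.map (fun p => (ρ g p.1, ρ g p.2)) = ν)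
    (D : EuclideanSpace ℝ (Fin n) → EuclideanSpace ℝ (Fin n))
    (hDmeas : Measurable D)
    (hint : Integrable (fun p : EuclideanSpace ℝ (Fin n) × EuclideanSpace ℝ (Fin n) =>
      ‖D (p.1 + p.2) - p.1‖) ν) :
    ∫ p : EuclideanSpace ℝ (Fin n) × EuclideanSpace ℝ (Fin n),
        ‖((Fintype.card G : ℝ)⁻¹ • ∑ g : G, (ρ g)⁻¹ (D (ρ g (p.1 + p.2)))) - p.1‖ ∂ν
      ≤ ∫ p : EuclideanSpace ℝ (Fin n) × EuclideanSpace ℝ (Fin n),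
          ‖D (p.1 + p.2) - p.1‖ ∂ν := by
  set F : (EuclideanSpace ℝ (Fin n)) × (EuclideanSpace ℝ (Fin n)) → ℝ := fun p => ‖D (p.1 + p.2) - p.1‖ with hF
  have hc : (0 : ℝ) < (Fintype.card G : ℝ) := by
    exact_mod_cast Fintype.card_pos
  have hFmeas : Measurable F := by
    apply Measurable.norm
    exact (hDmeas.comp (measurable_fst.add measurable_snd)).sub measurable_fst
  have hφ : ∀ g : G, Measurable (fun p : (EuclideanSpace ℝ (Fin n)) × (EuclideanSpace ℝ (Fin n)) => ((ρ g) p.1, (ρ g) p.2)) := fun g =>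
    (((ρ g).continuous.measurable).comp measurable_fst).prodMk
      (((ρ g).continuous.measurable).comp measurable_snd)
  -- pointwise identity
  have hpt : ∀ g : G, ∀ p : (EuclideanSpace ℝ (Fin n)) × (EuclideanSpace ℝ (Fin n)),
      ‖(ρ g)⁻¹ (D ((ρ g) (p.1 + p.2))) - p.1‖
        = F (((ρ g) p.1, (ρ g) p.2)) := by
    intro g p
    simp only [hF]
    rw [← map_add]
    have h1 : (ρ g) ((ρ g)⁻¹ (D ((ρ g) (p.1 + p.2)))) = D ((ρ g) (p.1 + p.2)) := by
      have := congrArg (fun e : EuclideanSpace ℝ (Fin n) ≃ₗᵢ[ℝ] EuclideanSpace ℝ (Fin n) => e (D ((ρ g) (p.1 + p.2))))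
        (mul_inv_cancel (ρ g))
      simpa using this
    calc ‖(ρ g)⁻¹ (D ((ρ g) (p.1 + p.2))) - p.1‖
        = ‖(ρ g) ((ρ g)⁻¹ (D ((ρ g) (p.1 + p.2))) - p.1)‖ := ((ρ g).norm_map _).symm
      _ = ‖D ((ρ g) (p.1 + p.2)) - (ρ g) p.1‖ := by rw [map_sub, h1]
  -- each term is integrable with the same integral
  have hintg : ∀ g : G,
      Integrable (fun p : (EuclideanSpace ℝ (Fin n)) × (EuclideanSpace ℝ (Fin n)) => ‖(ρ g)⁻¹ (D ((ρ g) (p.1 + p.2))) - p.1‖) ν := by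
    intro g
    have : Integrable (F ∘ fun p : (EuclideanSpace ℝ (Fin n)) × (EuclideanSpace ℝ (Fin n)) => ((ρ g) p.1, (ρ g) p.2)) ν := by
      rw [← integrable_map_measure hFmeas.aestronglyMeasurable (hφ g).aemeasurable,
        hinv g]
      exact hint
    refine this.congr (Filter.Eventually.of_forall fun p => ?_)
    exact (hpt g p).symm
  have hint_eq : ∀ g : G,
      ∫ p, ‖(ρ g)⁻¹ (D ((ρ g) (p.1 + p.2))) - p.1‖ ∂ν = ∫ p, F p ∂ν := by
    intro g
    calc ∫ p, ‖(ρ g)⁻¹ (D ((ρ g) (p.1 + p.2))) - p.1‖ ∂ν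
        = ∫ p, F (((ρ g) p.1, (ρ g) p.2)) ∂ν := by
          exact integral_congr_ae (Filter.Eventually.of_forall fun p => hpt g p)
      _ = ∫ p, F p ∂(ν.map (fun p : (EuclideanSpace ℝ (Fin n)) × (EuclideanSpace ℝ (Fin n)) => ((ρ g) p.1, (ρ g) p.2))) :=
          (integral_map (hφ g).aemeasurable hFmeas.aestronglyMeasurable).symm
      _ = ∫ p, F p ∂ν := by rw [hinv g]
  -- bound function
  set B : (EuclideanSpace ℝ (Fin n)) × (EuclideanSpace ℝ (Fin n)) → ℝ := fun p =>
    (Fintype.card G : ℝ)⁻¹ * ∑ g : G, ‖(ρ g)⁻¹ (D ((ρ g) (p.1 + p.2))) - p.1‖ with hB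
  have hBint : Integrable B ν := by
    apply Integrable.const_mul
    exact integrable_finset_sum _ fun g _ => hintg g
  have hle : ∀ p : (EuclideanSpace ℝ (Fin n)) × (EuclideanSpace ℝ (Fin n)),
      ‖((Fintype.card G : ℝ)⁻¹ • ∑ g : G, (ρ g)⁻¹ (D ((ρ g) (p.1 + p.2)))) - p.1‖ ≤ B p := by
    intro p
    have hx : p.1 = (Fintype.card G : ℝ)⁻¹ • ∑ _g : G, p.1 := by
      rw [Finset.sum_const, Finset.card_univ, ← Nat.cast_smul_eq_nsmul ℝ, smul_smul,
        inv_mul_cancel₀ hc.ne', one_smul]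
    calc ‖((Fintype.card G : ℝ)⁻¹ • ∑ g : G, (ρ g)⁻¹ (D ((ρ g) (p.1 + p.2)))) - p.1‖
        = ‖(Fintype.card G : ℝ)⁻¹ • ∑ g : G, ((ρ g)⁻¹ (D ((ρ g) (p.1 + p.2))) - p.1)‖ := by
          rw [Finset.sum_sub_distrib, smul_sub]
          congr 1
          rw [← hx]
      _ = (Fintype.card G : ℝ)⁻¹ * ‖∑ g : G, ((ρ g)⁻¹ (D ((ρ g) (p.1 + p.2))) - p.1)‖ := by
          rw [norm_smul, Real.norm_eq_abs, abs_of_pos (inv_pos.mpr hc)]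
      _ ≤ (Fintype.card G : ℝ)⁻¹ * ∑ g : G, ‖(ρ g)⁻¹ (D ((ρ g) (p.1 + p.2))) - p.1‖ := by
          gcongr
          exact norm_sum_le _ _
  calc ∫ p, ‖((Fintype.card G : ℝ)⁻¹ • ∑ g : G, (ρ g)⁻¹ (D ((ρ g) (p.1 + p.2)))) - p.1‖ ∂ν
      ≤ ∫ p, B p ∂ν := by
        apply integral_mono_of_nonneg
        · exact Filter.Eventually.of_forall fun p => norm_nonneg _
        · exact hBint
        · exact Filter.Eventually.of_forall hle
    _ = (Fintype.card G : ℝ)⁻¹ *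
          ∑ g : G, ∫ p, ‖(ρ g)⁻¹ (D ((ρ g) (p.1 + p.2))) - p.1‖ ∂ν := by
        rw [hB]
        rw [integral_const_mul]
        congr 1
        exact integral_finset_sum _ fun g _ => hintg g
    _ = (Fintype.card G : ℝ)⁻¹ * ∑ _g : G, ∫ p, F p ∂ν := by
        congr 1
        exact Finset.sum_congr rfl fun g _ => hint_eq g
    _ = ∫ p, F p ∂ν := by
        rw [Finset.sum_const, Finset.card_univ, nsmul_eq_mul, ← mul_assoc,
          inv_mul_cancel₀ hc.ne', one_mul]
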